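/- Let H be a Hermitian n×n complex matrix and A an arbitrary n×n complex matrix. Then 0 ≤ Re(trace( exp(−H) · (A·exp(H) − exp(H)·A) · (A·H − H·A)ᴴ )), where exp denotes the matrix exponential and ᴴ the conjugate transpose. -/

import Mathlib

open Matrix NormedSpace in
/-- For a Hermitian matrix `H` and any matrix `A`,
`0 ≤ Re tr(exp(−H)·(A·exp(H) − exp(H)·A)·(A·H − H·A)ᴴ)`. -/
theorem stmt_8 {n : ℕ} (H A : Matrix (Fin n) (Fin n) ℂ) (hH : Hᴴ = H) :
    0 ≤ (((NormedSpace.exp (-H)) * (A * NormedSpace.exp H - NormedSpace.exp H * A) * (A * H - H * A)ᴴ).trace).re := by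
  have hH' : H.IsHermitian := hH
  set U : Matrix (Fin n) (Fin n) ℂ := (hH'.eigenvectorUnitary : Matrix (Fin n) (Fin n) ℂ) with hUdef
  set lam : Fin n → ℝ := hH'.eigenvalues with hlam
  have hU1 : star U * U = 1 := Matrix.mem_unitaryGroup_iff'.mp hH'.eigenvectorUnitary.2
  have hU2 : U * star U = 1 := Matrix.mem_unitaryGroup_iff.mp hH'.eigenvectorUnitary.2
  set D : Matrix (Fin n) (Fin n) ℂ := diagonal (fun i => (lam i : ℂ)) with hD
  have h1 : H = U * D * star U := hH'.spectral_theorem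
  -- the unit
  set u : (Matrix (Fin n) (Fin n) ℂ)ˣ := ⟨U, star U, hU2, hU1⟩ with hu
  have hcoe : (u : Matrix (Fin n) (Fin n) ℂ) = U := rfl
  have hcoeinv : ((u⁻¹ : _ˣ) : Matrix (Fin n) (Fin n) ℂ) = star U := rfl
  have hexpD : ∀ v : Fin n → ℝ, NormedSpace.exp (diagonal (fun i => (v i : ℂ)))
      = diagonal (fun i => (Real.exp (v i) : ℂ)) := by
    intro v
    rw [Matrix.exp_diagonal, Pi.exp_def]
    ext i j
    simp [Matrix.diagonal_apply, ← Complex.exp_eq_exp_ℂ, Complex.ofReal_exp]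
  have hconj : ∀ v : Fin n → ℂ, NormedSpace.exp (U * diagonal v * star U) = U * NormedSpace.exp (diagonal v) * star U := by
    intro v
    have := Matrix.exp_units_conj u (diagonal v)
    rw [hcoe, hcoeinv] at this
    exact this
  have h2 : NormedSpace.exp H = U * diagonal (fun i => (Real.exp (lam i) : ℂ)) * star U := by
    rw [h1, hconj, hexpD]
  have h3 : NormedSpace.exp (-H) = U * diagonal (fun i => (Real.exp (-lam i) : ℂ)) * star U := by
    have hDneg : (diagonal (fun i => ((-lam i : ℝ) : ℂ)) : Matrix (Fin n) (Fin n) ℂ) = -D := by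
      rw [hD]
      ext i j
      simp only [Matrix.neg_apply, Matrix.diagonal_apply, Complex.ofReal_neg]
      split <;> simp
    have hnH : -H = U * diagonal (fun i => ((-lam i : ℝ) : ℂ)) * star U := by
      rw [hDneg, h1]
      noncomm_ring
    rw [hnH, hconj, hexpD]
  set B : Matrix (Fin n) (Fin n) ℂ := star U * A * U with hB
  have hA : A = U * B * star U := by
    rw [hB]
    calc A = (U * star U) * A * (U * star U) := by rw [hU2]; simp
    _ = U * (star U * A * U) * star U := by noncomm_ring
  set E : Matrix (Fin n) (Fin n) ℂ := diagonal (fun i => (Real.exp (lam i) : ℂ)) with hE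
  set E' : Matrix (Fin n) (Fin n) ℂ := diagonal (fun i => (Real.exp (-lam i) : ℂ)) with hE'
  have hmain : (NormedSpace.exp (-H)) * (A * NormedSpace.exp H - NormedSpace.exp H * A) * (A * H - H * A)ᴴ
      = U * (E' * (B * E - E * B) * (B * D - D * B)ᴴ) * star U := by
    rw [h2, h3, h1]
    conv_lhs => rw [hA]
    have hsUU : star U * U = 1 := hU1
    have expand : ∀ X : Matrix (Fin n) (Fin n) ℂ,
        (U * B * star U) * (U * X * star U) - (U * X * star U) * (U * B * star U)
          = U * (B * X - X * B) * star U := by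
      intro X
      have e1 : (U * B * star U) * (U * X * star U) = U * (B * X) * star U := by
        calc (U * B * star U) * (U * X * star U) = U * B * (star U * U) * X * star U := by
              noncomm_ring
        _ = U * (B * X) * star U := by rw [hsUU]; noncomm_ring
      have e2 : (U * X * star U) * (U * B * star U) = U * (X * B) * star U := by
        calc (U * X * star U) * (U * B * star U) = U * X * (star U * U) * B * star U := by
              noncomm_ring
        _ = U * (X * B) * star U := by rw [hsUU]; noncomm_ring
      rw [e1, e2, Matrix.mul_sub, Matrix.sub_mul]
    rw [expand E, expand D]
    have hct : (U * (B * D - D * B) * star U)ᴴ = U * (B * D - D * B)ᴴ * star U := by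
      simp [Matrix.conjTranspose_mul, Matrix.star_eq_conjTranspose, Matrix.mul_assoc]
    rw [hct]
    calc (U * E' * star U) * (U * (B * E - E * B) * star U) * (U * (B * D - D * B)ᴴ * star U)
        = U * E' * (star U * U) * (B * E - E * B) * (star U * U) * (B * D - D * B)ᴴ * star U := by
          noncomm_ring
      _ = U * (E' * (B * E - E * B) * (B * D - D * B)ᴴ) * star U := by
          rw [hU1]; noncomm_ring
  rw [hmain]
  have htr : (U * (E' * (B * E - E * B) * (B * D - D * B)ᴴ) * star U).trace
      = (E' * (B * E - E * B) * (B * D - D * B)ᴴ).trace := by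
    rw [Matrix.trace_mul_comm, ← Matrix.mul_assoc, hU1, Matrix.one_mul]
  rw [htr]
  have hentry : (E' * (B * E - E * B) * (B * D - D * B)ᴴ).trace
      = ∑ i, ∑ j, ((Real.exp (-lam i) : ℂ) * (B i j * (Real.exp (lam j) : ℂ)
          - (Real.exp (lam i) : ℂ) * B i j))
          * star (B i j * (lam j : ℂ) - (lam i : ℂ) * B i j) := by
    have hPQ : ∀ (P Q : Matrix (Fin n) (Fin n) ℂ), (P * Q).trace = ∑ i, ∑ j, P i j * Q j i := by
      intro P Q
      simp [Matrix.trace, Matrix.diag_apply, Matrix.mul_apply]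
    rw [hPQ]
    refine Finset.sum_congr rfl fun i _ => Finset.sum_congr rfl fun j _ => ?_
    simp only [hE, hE', hD, Matrix.sub_apply, Matrix.conjTranspose_apply,
      Matrix.diagonal_mul, Matrix.mul_diagonal]
  rw [hentry, Complex.re_sum]
  apply Finset.sum_nonneg
  intro i _
  rw [Complex.re_sum]
  apply Finset.sum_nonneg
  intro j _
  have key : ((Real.exp (-lam i) : ℂ) * (B i j * (Real.exp (lam j) : ℂ)
          - (Real.exp (lam i) : ℂ) * B i j))
          * star (B i j * (lam j : ℂ) - (lam i : ℂ) * B i j)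
      = ((Real.exp (-lam i) * (Real.exp (lam j) - Real.exp (lam i)) * (lam j - lam i) : ℝ) : ℂ)
          * ((Complex.normSq (B i j) : ℝ) : ℂ) := by
    rw [← Complex.mul_conj]
    simp only [star_sub, star_mul', Complex.star_def, Complex.conj_ofReal]
    push_cast
    ring
  rw [key]
  rw [← Complex.ofReal_mul, Complex.ofReal_re]
  apply mul_nonneg _ (Complex.normSq_nonneg _)
  rw [mul_assoc]
  apply mul_nonneg (Real.exp_pos _).le
  rcases le_total (lam i) (lam j) with h | h
  · exact mul_nonneg (sub_nonneg.mpr (Real.exp_le_exp.mpr h)) (sub_nonneg.mpr h)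
  · exact mul_nonneg_of_nonpos_of_nonpos (sub_nonpos.mpr (Real.exp_le_exp.mpr h))
      (sub_nonpos.mpr h)
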